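/- If A is an n×n complex P-matrix and α ⊆ {1,…,n}, then the Schur complement A/A[α] = A(α) − A(α,α]·A[α]⁻¹·A[α,α) is a P-matrix. -/

import Mathlib

/-- A complex matrix is a P-matrix if every principal minor is a positive real
number. -/
def IsPMatrix {ι : Type*} [Fintype ι] [DecidableEq ι] (A : Matrix ι ι ℂ) : Prop :=
  ∀ α : Finset ι, α.Nonempty →
    ∃ r : ℝ, 0 < r ∧
      (A.submatrix (fun i : {x // x ∈ α} => (i : ι))
        (fun i : {x // x ∈ α} => (i : ι))).det = (r : ℂ)

open Matrix Finset

section aux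
variable {n : ℕ} (α : Finset (Fin n)) (β : Finset {x // x ∈ αᶜ})

def bImg : Finset (Fin n) := β.image (fun x => ((x : {x // x ∈ αᶜ}) : Fin n))

def sumEquiv : ({x // x ∈ α} ⊕ {x // x ∈ β}) ≃ {x // x ∈ α ∪ bImg α β} where
  toFun s := match s with
    | .inl x => ⟨x, Finset.mem_union_left _ x.2⟩
    | .inr x => ⟨(x : {x // x ∈ αᶜ}), Finset.mem_union_right _
        (Finset.mem_image_of_mem _ x.2)⟩
  invFun x :=
    if h : (x : Fin n) ∈ α then .inl ⟨x, h⟩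
    else .inr ⟨⟨x, Finset.mem_compl.2 h⟩, by
      have hx := x.2
      rcases Finset.mem_union.1 hx with h1 | h2
      · exact absurd h1 h
      · rcases Finset.mem_image.1 h2 with ⟨y, hy, hxy⟩
        have : y = ⟨(x : Fin n), Finset.mem_compl.2 h⟩ := Subtype.ext hxy
        rwa [this] at hy⟩
  left_inv s := by
    cases s with
    | inl x => simp [x.2]
    | inr x =>
        have hx : ((x : {x // x ∈ αᶜ}) : Fin n) ∉ α :=
          Finset.mem_compl.1 (x : {x // x ∈ αᶜ}).2
        simp only [hx, dite_false]
  right_inv x := by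
    by_cases h : (x : Fin n) ∈ α <;> simp [h]

/-- determinant of a principal submatrix of a P-matrix is positive, incl. empty case -/
theorem det_pos (A : Matrix (Fin n) (Fin n) ℂ) (hA : IsPMatrix A) (γ : Finset (Fin n)) :
    ∃ r : ℝ, 0 < r ∧
      (A.submatrix (fun i : {x // x ∈ γ} => (i : Fin n))
        (fun i : {x // x ∈ γ} => (i : Fin n))).det = (r : ℂ) := by
  rcases γ.eq_empty_or_nonempty with h | h
  · refine ⟨1, one_pos, ?_⟩
    subst h
    haveI : IsEmpty {x // x ∈ (∅ : Finset (Fin n))} :=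
      ⟨fun x => (Finset.notMem_empty _ x.2)⟩
    simp [Matrix.det_isEmpty]
  · exact hA γ h

end aux

/-- the Schur complement `A/A[α] = A(α) - A(α,α] A[α]⁻¹ A[α,α)`
of a P-matrix is a P-matrix. -/
theorem stmt_12 {n : ℕ} (A : Matrix (Fin n) (Fin n) ℂ) (hA : IsPMatrix A)
    (α : Finset (Fin n)) :
    IsPMatrix
      (A.submatrix (fun i : {x // x ∈ αᶜ} => (i : Fin n))
          (fun i : {x // x ∈ αᶜ} => (i : Fin n)) -
        A.submatrix (fun i : {x // x ∈ αᶜ} => (i : Fin n))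
            (fun i : {x // x ∈ α} => (i : Fin n)) *
          (A.submatrix (fun i : {x // x ∈ α} => (i : Fin n))
            (fun i : {x // x ∈ α} => (i : Fin n)))⁻¹ *
          A.submatrix (fun i : {x // x ∈ α} => (i : Fin n))
            (fun i : {x // x ∈ αᶜ} => (i : Fin n))) := by
  intro β hβ
  classical
  set Aα : Matrix {x // x ∈ α} {x // x ∈ α} ℂ :=
    A.submatrix (fun i : {x // x ∈ α} => (i : Fin n))
      (fun i : {x // x ∈ α} => (i : Fin n)) with hAα
  obtain ⟨ra, hra, hdeta⟩ := det_pos A hA α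
  obtain ⟨rg, hrg, hdetg⟩ := det_pos A hA (α ∪ bImg α β)
  -- invertibility of Aα
  have hAαdet : IsUnit Aα.det := by
    rw [hdeta]; exact isUnit_iff_ne_zero.2 (by exact_mod_cast hra.ne')
  haveI : Invertible Aα := Aα.invertibleOfIsUnitDet hAαdet
  -- the reindexed big submatrix equals a block matrix
  set g : {x // x ∈ β} → Fin n := fun x => ((x : {x // x ∈ αᶜ}) : Fin n) with hg
  set f : {x // x ∈ α} → Fin n := fun i => (i : Fin n) with hf
  have hblock :
      (A.submatrix (fun i : {x // x ∈ α ∪ bImg α β} => (i : Fin n))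
        (fun i : {x // x ∈ α ∪ bImg α β} => (i : Fin n))).det =
      Aα.det * ((A.submatrix g g) - (A.submatrix g f) * Aα⁻¹ * (A.submatrix f g)).det := by
    rw [← Matrix.det_submatrix_equiv_self (sumEquiv α β)]
    have : (A.submatrix (fun i : {x // x ∈ α ∪ bImg α β} => (i : Fin n))
        (fun i : {x // x ∈ α ∪ bImg α β} => (i : Fin n))).submatrix
        (sumEquiv α β) (sumEquiv α β) =
        Matrix.fromBlocks Aα (A.submatrix f g) (A.submatrix g f) (A.submatrix g g) := by
      ext i j
      cases i <;> cases j <;> rfl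
    rw [this, Matrix.det_fromBlocks₁₁, Matrix.invOf_eq_nonsing_inv]
  -- identify the principal submatrix of the Schur complement
  have hS :
      ((A.submatrix (fun i : {x // x ∈ αᶜ} => (i : Fin n))
          (fun i : {x // x ∈ αᶜ} => (i : Fin n)) -
        A.submatrix (fun i : {x // x ∈ αᶜ} => (i : Fin n)) f *
          Aα⁻¹ *
          A.submatrix f (fun i : {x // x ∈ αᶜ} => (i : Fin n))).submatrix
        (fun i : {x // x ∈ β} => (i : {x // x ∈ αᶜ}))
        (fun i : {x // x ∈ β} => (i : {x // x ∈ αᶜ}))) =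
      (A.submatrix g g) - (A.submatrix g f) * Aα⁻¹ * (A.submatrix f g) := by
    ext i j
    simp [Matrix.mul_apply, Matrix.sub_apply, Matrix.submatrix_apply]
    rfl
  refine ⟨rg / ra, div_pos hrg hra, ?_⟩
  rw [hS]
  have key : (rg : ℂ) = (ra : ℂ) *
      ((A.submatrix g g) - (A.submatrix g f) * Aα⁻¹ * (A.submatrix f g)).det := by
    rw [← hdeta, ← hblock, hdetg]
  push_cast
  rw [eq_div_iff (by exact_mod_cast hra.ne'), mul_comm]
  exact key.symm
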